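/- For any complex numbers θ, ς, a, b, one has |θa - ςb|² + |θb - ς̄a|² ≥ (|θ| - |ς|)²(|a|² + |b|²). -/

import Mathlib

set_option maxHeartbeats 1000000 in
/-- For complex `θ, ς, a, b`:
`|θa - ςb|² + |θb - ς̄a|² ≥ (|θ| - |ς|)² (|a|² + |b|²)`. -/
theorem stmt_4 (θ ς a b : ℂ) :
    ‖θ * a - ς * b‖ ^ 2 + ‖θ * b - (starRingEnd ℂ) ς * a‖ ^ 2 ≥
      (‖θ‖ - ‖ς‖) ^ 2 * (‖a‖ ^ 2 + ‖b‖ ^ 2) := by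
  obtain ⟨p, q⟩ := θ; obtain ⟨u, v⟩ := ς; obtain ⟨c, d⟩ := a; obtain ⟨e, f⟩ := b
  have hn : ∀ z : ℂ, ‖z‖ ^ 2 = z.re ^ 2 + z.im ^ 2 := by
    intro z
    rw [Complex.sq_norm, Complex.normSq_apply]; ring
  have hts : 0 ≤ ‖(⟨p,q⟩:ℂ)‖ * ‖(⟨u,v⟩:ℂ)‖ := by positivity
  have ht2 : ‖(⟨p,q⟩:ℂ)‖ ^ 2 = p ^ 2 + q ^ 2 := hn _
  have hs2 : ‖(⟨u,v⟩:ℂ)‖ ^ 2 = u ^ 2 + v ^ 2 := hn _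
  have ha2 : ‖(⟨c,d⟩:ℂ)‖ ^ 2 = c ^ 2 + d ^ 2 := hn _
  have hb2 : ‖(⟨e,f⟩:ℂ)‖ ^ 2 = e ^ 2 + f ^ 2 := hn _
  have h1 : ‖(⟨p,q⟩:ℂ) * ⟨c,d⟩ - (⟨u,v⟩:ℂ) * ⟨e,f⟩‖ ^ 2 =
      (p*c - q*d - (u*e - v*f))^2 + (p*d + q*c - (u*f + v*e))^2 := by
    rw [hn]
    simp only [Complex.sub_re, Complex.sub_im, Complex.mul_re, Complex.mul_im]
    try ring
  have h2 : ‖(⟨p,q⟩:ℂ) * ⟨e,f⟩ - (starRingEnd ℂ) (⟨u,v⟩:ℂ) * ⟨c,d⟩‖ ^ 2 =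
      (p*e - q*f - (u*c + v*d))^2 + (p*f + q*e - (u*d - v*c))^2 := by
    rw [hn]
    simp only [Complex.sub_re, Complex.sub_im, Complex.mul_re, Complex.mul_im,
      Complex.conj_re, Complex.conj_im]
    try ring
  set S := Real.sqrt ((c^2+d^2)*(e^2+f^2)) with hSdef
  have hS0 : 0 ≤ S := Real.sqrt_nonneg _
  have hSsq : S ^ 2 = (c^2+d^2)*(e^2+f^2) := Real.sq_sqrt (by positivity)
  have hX : (u*(c*e + d*f) - v*(c*f - d*e))^2 ≤ (u^2+v^2)*((c^2+d^2)*(e^2+f^2)) := by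
    nlinarith [sq_nonneg (u*(c*f - d*e) + v*(c*e + d*f))]
  have hKsq : (2 * p * (u*(c*e + d*f) - v*(c*f - d*e)))^2 ≤
      (‖(⟨p,q⟩:ℂ)‖ * ‖(⟨u,v⟩:ℂ)‖ * (2 * S))^2 := by
    have hp : p^2 ≤ p^2 + q^2 := by linarith [sq_nonneg q]
    have hstep : p^2 * (u*(c*e + d*f) - v*(c*f - d*e))^2 ≤
        (p^2+q^2) * ((u^2+v^2)*((c^2+d^2)*(e^2+f^2))) :=
      mul_le_mul hp hX (sq_nonneg _) (by positivity)
    have hm : (‖(⟨p,q⟩:ℂ)‖ * ‖(⟨u,v⟩:ℂ)‖)^2 = (p^2+q^2)*(u^2+v^2) := by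
      rw [mul_pow, ht2, hs2]
    nlinarith [hstep, hm, hSsq]
  have hM : 0 ≤ ‖(⟨p,q⟩:ℂ)‖ * ‖(⟨u,v⟩:ℂ)‖ * (2 * S) := by positivity
  have h3 : 2 * p * (u*(c*e + d*f) - v*(c*f - d*e)) ≤
      ‖(⟨p,q⟩:ℂ)‖ * ‖(⟨u,v⟩:ℂ)‖ * (2 * S) := by
    nlinarith [hKsq, hM]
  have h4 : ‖(⟨p,q⟩:ℂ)‖ * ‖(⟨u,v⟩:ℂ)‖ * (2 * S) ≤
      ‖(⟨p,q⟩:ℂ)‖ * ‖(⟨u,v⟩:ℂ)‖ * ((c^2+d^2) + (e^2+f^2)) := by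
    have h5 : 2 * S ≤ (c^2+d^2) + (e^2+f^2) := by
      nlinarith [hSsq, hS0, sq_nonneg ((c^2+d^2) - (e^2+f^2)), sq_nonneg (S - (c^2+d^2))]
    exact mul_le_mul_of_nonneg_left h5 hts
  have hK : 2 * p * (u*(c*e + d*f) - v*(c*f - d*e)) ≤
      ‖(⟨p,q⟩:ℂ)‖ * ‖(⟨u,v⟩:ℂ)‖ * ((c^2+d^2) + (e^2+f^2)) := le_trans h3 h4
  have hr : (‖(⟨p,q⟩:ℂ)‖ - ‖(⟨u,v⟩:ℂ)‖)^2 = p^2 + q^2 + (u^2 + v^2) - 2*(‖(⟨p,q⟩:ℂ)‖*‖(⟨u,v⟩:ℂ)‖) := by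
    rw [sub_sq, ht2, hs2]; ring
  rw [h1, h2, ha2, hb2, hr]
  nlinarith [hK]
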